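/- Reduction of CMSC with forced residue to a forest: Let G = (V,E,ω,c) be a weighted graph and S_1 ⊆ V such that G − S_1 is a forest F. Define potentials p(v) = Σ_{e ∈ E(\{v\}, S_1)} c(e) for v ∈ V \ S_1. Then for any connected κ-subpartition {A_i} of V with S_1 contained in the residue, each A_i is a connected subset of F and c_G(∂_G A_i)/ω(A_i) = (c_F(∂_F A_i) + p(A_i))/ω(A_i), where p(A_i) = Σ_{v∈A_i} p(v). Consequently, G admits a connected κ-subpartition with all conductances ≤ ξ, residue ≤ λ and S_1 ⊆ residue, if and only if F with potentials p admits a connected κ-subpartition with all potential-adjusted conductances ≤ ξ and residue ≤ λ − |S_1|. -/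

import Mathlib

open scoped Classical

noncomputable section

variable {V : Type} [Fintype V] [DecidableEq V]

/-- The graph `F = G − S₁` obtained by deleting the vertices of `S₁` (kept on
the same vertex set, with the vertices of `S₁` isolated). -/
def delVerts (G : SimpleGraph V) (S1 : Finset V) : SimpleGraph V where
  Adj u v := G.Adj u v ∧ u ∉ S1 ∧ v ∉ S1
  symm := by
    constructor
    intro u v h
    exact ⟨h.1.symm, h.2.2, h.2.1⟩
  loopless := by
    constructor
    intro v h
    exact G.loopless.irrefl v h.1

/-- `c(∂_H A)`: total weight of edges of `H` with exactly one endpoint in `A`. -/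
def cutIn (H : SimpleGraph V) (c : V → V → ℚ) (A : Finset V) : ℚ :=
  ∑ u ∈ A, ∑ v ∈ Finset.univ \ A, if H.Adj u v then c u v else 0

/-- The potential `p(v) = Σ_{e ∈ E({v},S₁)} c(e)`. -/
def pot (G : SimpleGraph V) (c : V → V → ℚ) (S1 : Finset V) (v : V) : ℚ :=
  ∑ s ∈ S1, if G.Adj v s then c v s else 0

/-- `A` induces a connected subgraph of `H`. -/
def connIn (H : SimpleGraph V) (A : Finset V) : Prop :=
  (H.induce ((A : Finset V) : Set V)).Connected

lemma induce_del_eq (G : SimpleGraph V) (S1 A : Finset V) (hA : ∀ v ∈ A, v ∉ S1) :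
    G.induce ((A : Finset V) : Set V) = (delVerts G S1).induce ((A : Finset V) : Set V) := by
  ext ⟨a, ha⟩ ⟨b, hb⟩
  simp only [SimpleGraph.comap_adj, Function.Embedding.coe_subtype, delVerts]
  exact ⟨fun h => ⟨h, hA a (by exact_mod_cast ha), hA b (by exact_mod_cast hb)⟩, fun h => h.1⟩

lemma conn_del_iff (G : SimpleGraph V) (S1 A : Finset V) (hA : ∀ v ∈ A, v ∉ S1) :
    connIn G A ↔ connIn (delVerts G S1) A := by
  unfold connIn
  rw [induce_del_eq G S1 A hA]

lemma cut_del_eq (G : SimpleGraph V) (c : V → V → ℚ) (S1 A : Finset V)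
    (hA : ∀ v ∈ A, v ∉ S1) :
    cutIn G c A = cutIn (delVerts G S1) c A + ∑ v ∈ A, pot G c S1 v := by
  unfold cutIn pot
  rw [← Finset.sum_add_distrib]
  apply Finset.sum_congr rfl
  intro u hu
  have huS : u ∉ S1 := hA u hu
  have hS1 : S1 ⊆ Finset.univ \ A := fun s hs =>
    Finset.mem_sdiff.2 ⟨Finset.mem_univ s, fun h => hA s h hs⟩
  rw [← Finset.sum_sdiff hS1 (f := fun v => if G.Adj u v then c u v else 0),
      ← Finset.sum_sdiff hS1 (f := fun v => if (delVerts G S1).Adj u v then c u v else 0)]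
  have h1 : ∑ v ∈ (Finset.univ \ A) \ S1, (if G.Adj u v then c u v else 0) =
      ∑ v ∈ (Finset.univ \ A) \ S1, (if (delVerts G S1).Adj u v then c u v else 0) := by
    apply Finset.sum_congr rfl
    intro v hv
    have hvS : v ∉ S1 := (Finset.mem_sdiff.1 hv).2
    simp only [delVerts]
    by_cases h : G.Adj u v <;> simp [h, huS, hvS]
  have h2 : ∑ v ∈ S1, (if (delVerts G S1).Adj u v then c u v else 0) = 0 := by
    apply Finset.sum_eq_zero
    intro v hv
    simp only [delVerts]
    simp [hv]
  rw [h1, h2]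
  ring

lemma residue_card (S1 : Finset V) (A : Finset V)
    (hA : A ⊆ Finset.univ \ S1) (hS : S1 ⊆ Finset.univ \ A) :
    (Finset.univ \ A).card = ((Finset.univ \ S1) \ A).card + S1.card := by
  have h := Finset.card_sdiff_add_card_eq_card hS
  rw [← h, sdiff_right_comm]

/-- reduction of CMSC with forced residue to a forest: if
`G − S₁` is a forest `F` and `p(v) = Σ_{e ∈ E({v},S₁)} c(e)`, then (i) for any
connected `κ`-subpartition `{A_i}` of `V` with `S₁` contained in the residue,
each `A_i` is a connected subset of `F` and
`c_G(∂_G A_i) = c_F(∂_F A_i) + p(A_i)`; and (ii) `G` admits a connected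
`κ`-subpartition with all conductances ≤ `ξ`, residue ≤ `λ` and `S₁ ⊆` residue
iff `F` with potentials `p` admits a connected `κ`-subpartition with all
potential-adjusted conductances ≤ `ξ` and residue ≤ `λ − |S₁|`. -/
theorem stmt16 (G : SimpleGraph V) (ω : V → ℚ) (c : V → V → ℚ)
    (hω : ∀ v, 0 < ω v) (hc : ∀ u v, 0 ≤ c u v) (hcs : ∀ u v, c u v = c v u)
    (S1 : Finset V) (hforest : (delVerts G S1).IsAcyclic) :
    (∀ (κ : ℕ) (A : Fin κ → Finset V),
      (∀ i, (A i).Nonempty) → (∀ i j, i ≠ j → Disjoint (A i) (A j)) →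
      (∀ i, connIn G (A i)) → S1 ⊆ Finset.univ \ Finset.univ.biUnion A →
      ∀ i, A i ⊆ Finset.univ \ S1 ∧ connIn (delVerts G S1) (A i) ∧
        cutIn G c (A i) = cutIn (delVerts G S1) c (A i) + ∑ v ∈ A i, pot G c S1 v) ∧
    (∀ (κ lam : ℕ) (ξ : ℚ), 1 ≤ κ → 0 ≤ ξ →
      ((∃ A : Fin κ → Finset V, (∀ i, (A i).Nonempty) ∧
          (∀ i j, i ≠ j → Disjoint (A i) (A j)) ∧
          (∀ i, connIn G (A i)) ∧
          (∀ i, cutIn G c (A i) / ∑ v ∈ A i, ω v ≤ ξ) ∧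
          S1 ⊆ Finset.univ \ Finset.univ.biUnion A ∧
          (Finset.univ \ Finset.univ.biUnion A).card ≤ lam) ↔
       (∃ A : Fin κ → Finset V, (∀ i, (A i).Nonempty) ∧
          (∀ i j, i ≠ j → Disjoint (A i) (A j)) ∧
          (∀ i, A i ⊆ Finset.univ \ S1) ∧
          (∀ i, connIn (delVerts G S1) (A i)) ∧
          (∀ i, (cutIn (delVerts G S1) c (A i) + ∑ v ∈ A i, pot G c S1 v) /
              ∑ v ∈ A i, ω v ≤ ξ) ∧
          ((((Finset.univ \ S1) \ Finset.univ.biUnion A).card : ℤ) ≤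
            (lam : ℤ) - (S1.card : ℤ))))) := by
  constructor
  · intro κ A hne hdis hconn hres i
    have hAsub : ∀ v ∈ A i, v ∉ S1 := by
      intro v hv hvS
      have h := hres hvS
      rw [Finset.mem_sdiff] at h
      exact h.2 (Finset.mem_biUnion.2 ⟨i, Finset.mem_univ i, hv⟩)
    refine ⟨fun v hv => Finset.mem_sdiff.2 ⟨Finset.mem_univ v, hAsub v hv⟩,
      (conn_del_iff G S1 (A i) hAsub).1 (hconn i),
      cut_del_eq G c S1 (A i) hAsub⟩
  · intro κ lam ξ hκ hξ
    constructor
    · rintro ⟨A, hne, hdis, hconn, hcond, hres, hcard⟩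
      have hAsub : ∀ i, ∀ v ∈ A i, v ∉ S1 := by
        intro i v hv hvS
        have h := hres hvS
        rw [Finset.mem_sdiff] at h
        exact h.2 (Finset.mem_biUnion.2 ⟨i, Finset.mem_univ i, hv⟩)
      refine ⟨A, hne, hdis,
        fun i v hv => Finset.mem_sdiff.2 ⟨Finset.mem_univ v, hAsub i v hv⟩,
        fun i => (conn_del_iff G S1 (A i) (hAsub i)).1 (hconn i),
        fun i => by rw [← cut_del_eq G c S1 (A i) (hAsub i)]; exact hcond i, ?_⟩
      have hbU : Finset.univ.biUnion A ⊆ Finset.univ \ S1 := by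
        intro v hv
        obtain ⟨i, _, hvi⟩ := Finset.mem_biUnion.1 hv
        exact Finset.mem_sdiff.2 ⟨Finset.mem_univ v, hAsub i v hvi⟩
      have h := residue_card S1 (Finset.univ.biUnion A) hbU hres
      have : ((Finset.univ \ S1) \ Finset.univ.biUnion A).card + S1.card ≤ lam := by
        rw [← h]; exact hcard
      omega
    · rintro ⟨A, hne, hdis, hsub, hconn, hcond, hcard⟩
      have hAsub : ∀ i, ∀ v ∈ A i, v ∉ S1 := fun i v hv =>
        (Finset.mem_sdiff.1 (hsub i hv)).2
      have hbU : Finset.univ.biUnion A ⊆ Finset.univ \ S1 := by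
        intro v hv
        obtain ⟨i, _, hvi⟩ := Finset.mem_biUnion.1 hv
        exact hsub i hvi
      have hres : S1 ⊆ Finset.univ \ Finset.univ.biUnion A := by
        intro s hs
        refine Finset.mem_sdiff.2 ⟨Finset.mem_univ s, fun h => ?_⟩
        obtain ⟨i, _, hsi⟩ := Finset.mem_biUnion.1 h
        exact hAsub i s hsi hs
      refine ⟨A, hne, hdis,
        fun i => (conn_del_iff G S1 (A i) (hAsub i)).2 (hconn i),
        fun i => by rw [cut_del_eq G c S1 (A i) (hAsub i)]; exact hcond i,
        hres, ?_⟩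
      have h := residue_card S1 (Finset.univ.biUnion A) hbU hres
      omega
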